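/- Let n ≥ 1 and b = 2^{−(n+1)}. For each P ⊆ N define the constraint g_P(x) := Σ_{i∈P}(1 − x_i) + Σ_{i∈N∖P} x_i − b, so that g_P(x_I) = |I Δ P| − b for every I ⊆ N (Δ denoting symmetric difference). Then: (i) no x ∈ {0,1}^n satisfies g_P(x) ≥ 0 for all P ⊆ N (indeed g_P(x_P) = −b < 0), so the integer hull is empty; and (ii) the symmetric assignment y_I^N = 2^{−n} for all I ⊆ N satisfies, for every P ⊆ N: g_P(x_I) y_I^N < 0 exactly for I = P, g_P(x_I) y_I^N > 0 for all I ≠ P, and Σ_{I⊆N} 1/(g_P(x_I) y_I^N) ≤ 0, the last being equivalent to Σ_{∅≠I⊆N} 1/(|I| − b) ≤ 1/b. -/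

import Mathlib

open Finset

/-- An undetected empty integer hull: for `b = 2^{-(n+1)}` and the constraints
`g_P(x) = ∑_{i∈P}(1-x_i) + ∑_{i∉P} x_i - b ≥ 0` (one for each `P ⊆ N`), with
`g_P(x_I) = |I Δ P| - b`, no 0/1 point satisfies all constraints, yet the symmetric
assignment `y_I^N = 2^{-n}` satisfies the level-`(n-1)` feasibility conditions for
every constraint. -/
theorem undetected_empty_integer_hull (n : ℕ) (hn : 1 ≤ n)
    (b : ℝ) (hb : b = 1 / 2 ^ (n + 1))
    (Y : Finset (Fin n) → ℝ) (hY : ∀ I : Finset (Fin n), Y I = 1 / 2 ^ n) :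
    (¬ ∃ I : Finset (Fin n), ∀ P : Finset (Fin n),
        0 ≤ ((((I \ P) ∪ (P \ I)).card : ℝ) - b)) ∧
    (∀ P : Finset (Fin n),
      (((((P \ P) ∪ (P \ P)).card : ℝ) - b) * Y P < 0) ∧
      (∀ I : Finset (Fin n), I ≠ P →
        0 < ((((I \ P) ∪ (P \ I)).card : ℝ) - b) * Y I) ∧
      (∑ I : Finset (Fin n), 1 / (((((I \ P) ∪ (P \ I)).card : ℝ) - b) * Y I) ≤ 0) ∧
      ((∑ I : Finset (Fin n), 1 / (((((I \ P) ∪ (P \ I)).card : ℝ) - b) * Y I) ≤ 0)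
        ↔ (∑ I ∈ Finset.univ.filter (fun I : Finset (Fin n) => I ≠ ∅),
            1 / ((I.card : ℝ) - b)) ≤ 1 / b)) := by
  have hbpos : 0 < b := by rw [hb]; positivity
  have hble : b ≤ 1 / 2 := by
    rw [hb]
    rw [div_le_div_iff₀ (by positivity) (by norm_num)]
    have : (4 : ℝ) ≤ 2 ^ (n + 1) := by
      calc (4 : ℝ) = 2 ^ 2 := by norm_num
      _ ≤ 2 ^ (n + 1) := by
        apply pow_le_pow_right₀ (by norm_num); omega
    linarith
  have hYpos : ∀ I : Finset (Fin n), 0 < Y I := by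
    intro I; rw [hY]; positivity
  -- symmDiff rewriting
  have hsd : ∀ I P : Finset (Fin n), (I \ P) ∪ (P \ I) = symmDiff I P := by
    intro I P; rw [symmDiff_def, sup_eq_union]
  -- card of symmDiff positive when I ≠ P
  have hcard1 : ∀ I P : Finset (Fin n), I ≠ P → 1 ≤ (symmDiff I P).card := by
    intro I P h
    rw [Nat.one_le_iff_ne_zero, Ne, card_eq_zero, ← bot_eq_empty, symmDiff_eq_bot]
    exact h
  constructor
  · rintro ⟨I, hI⟩
    have := hI I
    simp only [sdiff_self, empty_union, card_empty, Nat.cast_zero, bot_eq_empty] at this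
    linarith
  intro P
  -- the change-of-variables sum identity
  have key : ∑ I : Finset (Fin n), 1 / ((((I \ P) ∪ (P \ I)).card : ℝ) - b)
      = ∑ J : Finset (Fin n), 1 / ((J.card : ℝ) - b) := by
    refine Fintype.sum_bijective (fun I => symmDiff I P) ⟨?_, ?_⟩ _ _ ?_
    · intro a c h
      have h2 : symmDiff (symmDiff a P) P = symmDiff (symmDiff c P) P := by
        simp only at h; rw [h]
      rwa [symmDiff_symmDiff_cancel_right P a, symmDiff_symmDiff_cancel_right P c] at h2
    · intro J; exact ⟨symmDiff J P, symmDiff_symmDiff_cancel_right P J⟩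
    · intro I; rw [hsd]
  have hsum : ∑ I : Finset (Fin n), 1 / (((((I \ P) ∪ (P \ I)).card : ℝ) - b) * Y I)
      = (2 : ℝ) ^ n * (∑ J : Finset (Fin n), 1 / ((J.card : ℝ) - b)) := by
    rw [← key, mul_sum]
    refine Finset.sum_congr rfl fun I _ => ?_
    simp only [hY]
    field_simp
  have hsplit : ∑ J : Finset (Fin n), 1 / ((J.card : ℝ) - b)
      = -(1/b) + ∑ I ∈ Finset.univ.filter (fun I : Finset (Fin n) => I ≠ ∅),
          1 / ((I.card : ℝ) - b) := by
    rw [← Finset.sum_filter_add_sum_filter_not Finset.univ (fun I : Finset (Fin n) => I ≠ ∅)]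
    simp only [not_ne_iff]
    rw [Finset.filter_eq' Finset.univ (∅ : Finset (Fin n))]
    simp [one_div, inv_neg, add_comm]
  -- the main bound
  have hbound : (∑ I ∈ Finset.univ.filter (fun I : Finset (Fin n) => I ≠ ∅),
      1 / ((I.card : ℝ) - b)) ≤ 1 / b := by
    have hterm : ∀ I ∈ Finset.univ.filter (fun I : Finset (Fin n) => I ≠ ∅),
        1 / ((I.card : ℝ) - b) ≤ 2 := by
      intro I hI
      simp only [mem_filter] at hI
      have h1 : 1 ≤ (I.card : ℝ) := by
        have := hcard1 I ∅ hI.2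
        simp only [symmDiff_bot, symmDiff_eq_sup] at *
        have : 1 ≤ I.card := by
          rw [Nat.one_le_iff_ne_zero]; simpa [card_eq_zero] using hI.2
        exact_mod_cast this
      rw [div_le_iff₀ (by linarith)]
      linarith
    calc (∑ I ∈ Finset.univ.filter (fun I : Finset (Fin n) => I ≠ ∅),
        1 / ((I.card : ℝ) - b)) ≤ ∑ I ∈ Finset.univ.filter (fun I : Finset (Fin n) => I ≠ ∅), 2 :=
        Finset.sum_le_sum hterm
      _ = 2 * ((Finset.univ.filter (fun I : Finset (Fin n) => I ≠ ∅)).card : ℝ) := by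
          rw [Finset.sum_const]; ring
      _ ≤ 2 * (2 ^ n - 1) := by
          have : (Finset.univ.filter (fun I : Finset (Fin n) => I ≠ ∅)).card ≤ 2 ^ n - 1 := by
            have h1 : (Finset.univ.filter (fun I : Finset (Fin n) => I ≠ ∅)).card
                = Fintype.card (Finset (Fin n)) - 1 := by
              rw [Finset.filter_ne' Finset.univ (∅ : Finset (Fin n))]
              simp [Finset.card_erase_of_mem]
            rw [h1]; simp
          have h2 : ((Finset.univ.filter (fun I : Finset (Fin n) => I ≠ ∅)).card : ℝ) ≤ (2:ℝ)^n - 1 := by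
            have hc : ((2:ℕ)^n - 1 : ℕ) = ((2:ℕ)^n : ℕ) - 1 := rfl
            have := Nat.cast_le (α := ℝ).mpr this
            calc ((Finset.univ.filter (fun I : Finset (Fin n) => I ≠ ∅)).card : ℝ)
                ≤ ((2^n - 1 : ℕ) : ℝ) := this
              _ = (2:ℝ)^n - 1 := by
                  have : (1:ℕ) ≤ 2^n := Nat.one_le_two_pow
                  push_cast [Nat.cast_sub this]; ring
          linarith
      _ = 2 ^ (n+1) - 2 := by ring
      _ ≤ 1 / b := by
          rw [hb, one_div_one_div]; linarith
  refine ⟨?_, ?_, ?_, ?_⟩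
  · simp only [sdiff_self, bot_eq_empty, empty_union, card_empty, Nat.cast_zero]
    have := hYpos P
    nlinarith
  · intro I hIP
    have h1 : (1 : ℝ) ≤ ((I \ P) ∪ (P \ I)).card := by
      rw [hsd]; exact_mod_cast hcard1 I P hIP
    have := hYpos I
    nlinarith
  · rw [hsum, hsplit]
    nlinarith [pow_pos (show (0:ℝ) < 2 by norm_num) n]
  · rw [hsum, hsplit]
    constructor
    · intro h
      nlinarith [pow_pos (show (0:ℝ) < 2 by norm_num) n]
    · intro h
      nlinarith [pow_pos (show (0:ℝ) < 2 by norm_num) n]
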